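/- Let V = {(z, w) ∈ ℂ² : |w| < 1 + |z|²}. Then there exists an injective holomorphic map Φ : ℂ² → ℂ² whose image is contained in V. -/

import Mathlib

open Complex Filter Topology

noncomputable section
namespace S7

def G (y : ℂ × ℂ) : ℂ × ℂ := (2*y.1 + y.2*y.2, 2*y.2 + (2*y.1 + y.2*y.2)*(2*y.1 + y.2*y.2))
def Fm (y : ℂ × ℂ) : ℂ × ℂ := ((y.1 - (y.2 - y.1^2)^2/4)/2, (y.2 - y.1^2)/2)

lemma FG (y : ℂ × ℂ) : Fm (G y) = y := by
  obtain ⟨a,b⟩ := y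
  simp only [G, Fm, Prod.mk.injEq]
  constructor <;> ring

lemma norm_def (y : ℂ × ℂ) : ‖y‖ = max ‖y.1‖ ‖y.2‖ := rfl
lemma nfst (y : ℂ × ℂ) : ‖y.1‖ ≤ ‖y‖ := le_max_left _ _
lemma nsnd (y : ℂ × ℂ) : ‖y.2‖ ≤ ‖y‖ := le_max_right _ _
lemma npair (a b : ℂ) {r : ℝ} (h1 : ‖a‖ ≤ r) (h2 : ‖b‖ ≤ r) : ‖((a,b) : ℂ × ℂ)‖ ≤ r :=
  max_le h1 h2

def A (y : ℂ × ℂ) : (ℂ × ℂ) →L[ℂ] (ℂ × ℂ) :=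
  ((2:ℂ) • (ContinuousLinearMap.fst ℂ ℂ ℂ) + (2*y.2) • (ContinuousLinearMap.snd ℂ ℂ ℂ)).prod
  ((2:ℂ) • (ContinuousLinearMap.snd ℂ ℂ ℂ) +
    (2*(2*y.1 + y.2*y.2)) • ((2:ℂ) • (ContinuousLinearMap.fst ℂ ℂ ℂ) + (2*y.2) • (ContinuousLinearMap.snd ℂ ℂ ℂ)))

lemma A_apply (y u : ℂ × ℂ) :
    A y u = (2*u.1 + 2*y.2*u.2, 2*u.2 + 2*(2*y.1+y.2*y.2)*(2*u.1 + 2*y.2*u.2)) := by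
  simp only [A, ContinuousLinearMap.prod_apply, ContinuousLinearMap.add_apply,
    ContinuousLinearMap.coe_smul', Pi.smul_apply, ContinuousLinearMap.coe_fst',
    ContinuousLinearMap.coe_snd', smul_eq_mul, Prod.mk.injEq]

lemma hasFDerivAt_G (y : ℂ × ℂ) : HasFDerivAt G (A y) y := by
  have hf : HasFDerivAt (fun y : ℂ × ℂ => y.1) (ContinuousLinearMap.fst ℂ ℂ ℂ) y := hasFDerivAt_fst
  have hs : HasFDerivAt (fun y : ℂ × ℂ => y.2) (ContinuousLinearMap.snd ℂ ℂ ℂ) y := hasFDerivAt_snd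
  have h1 : HasFDerivAt (fun y : ℂ × ℂ => 2*y.1 + y.2*y.2)
      ((2:ℂ) • (ContinuousLinearMap.fst ℂ ℂ ℂ) + (2*y.2) • (ContinuousLinearMap.snd ℂ ℂ ℂ)) y := by
    have := (hf.const_mul (2:ℂ)).add (hs.mul hs)
    refine this.congr_fderiv (ContinuousLinearMap.ext fun u => ?_)
    simp
    try ring
  have h2 : HasFDerivAt (fun y : ℂ × ℂ => 2*y.2 + (2*y.1 + y.2*y.2)*(2*y.1 + y.2*y.2))
      ((2:ℂ) • (ContinuousLinearMap.snd ℂ ℂ ℂ) +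
        (2*(2*y.1 + y.2*y.2)) • ((2:ℂ) • (ContinuousLinearMap.fst ℂ ℂ ℂ) + (2*y.2) • (ContinuousLinearMap.snd ℂ ℂ ℂ))) y := by
    have := (hs.const_mul (2:ℂ)).add (h1.mul h1)
    refine this.congr_fderiv (ContinuousLinearMap.ext fun u => ?_)
    simp
    try ring
  exact h1.prodMk h2

lemma diff_G : Differentiable ℂ G := fun y => (hasFDerivAt_G y).differentiableAt
lemma cont_G : Continuous G := diff_G.continuous

lemma ntwo : ‖(2:ℂ)‖ = 2 := by norm_num
lemma c_ne : (2:ℂ)⁻¹ ≠ 0 := by norm_num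

lemma normP {y : ℂ × ℂ} (hy : ‖y‖ ≤ 1) : ‖2*y.1 + y.2*y.2‖ ≤ 3*‖y‖ := by
  have h1 := nfst y; have h2 := nsnd y
  have h0 : (0:ℝ) ≤ ‖y‖ := norm_nonneg _
  calc ‖2*y.1 + y.2*y.2‖ ≤ ‖2*y.1‖ + ‖y.2*y.2‖ := norm_add_le _ _
    _ = 2*‖y.1‖ + ‖y.2‖*‖y.2‖ := by simp [norm_mul, ntwo]
    _ ≤ 2*‖y‖ + ‖y‖*1 := by
        have : ‖y.2‖*‖y.2‖ ≤ ‖y‖*1 :=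
          mul_le_mul h2 (h2.trans hy) (norm_nonneg _) h0
        linarith
    _ ≤ 3*‖y‖ := by linarith

lemma PG1 {y : ℂ × ℂ} (hy : ‖y‖ ≤ 1) : ‖G y - (2:ℂ)•y‖ ≤ 9*‖y‖^2 := by
  have h0 : (0:ℝ) ≤ ‖y‖ := norm_nonneg _
  have h2 := nsnd y
  have hP := normP hy
  have : G y - (2:ℂ)•y = (y.2*y.2, (2*y.1 + y.2*y.2)*(2*y.1 + y.2*y.2)) := by
    simp only [G, Prod.smul_def, Prod.mk_sub_mk, smul_eq_mul, Prod.mk.injEq]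
    constructor <;> ring
  rw [this]
  refine npair _ _ ?_ ?_
  · rw [norm_mul]
    nlinarith [mul_le_mul h2 h2 (norm_nonneg _) h0]
  · rw [norm_mul]
    nlinarith [mul_le_mul hP hP (norm_nonneg _) (by positivity : (0:ℝ) ≤ 3*‖y‖)]

lemma PG1' {y : ℂ × ℂ} (hy : ‖y‖ ≤ 1) : ‖G y‖ ≤ 2*‖y‖ + 9*‖y‖^2 := by
  have := PG1 hy
  have h : ‖G y‖ - ‖(2:ℂ)•y‖ ≤ ‖G y - (2:ℂ)•y‖ := norm_sub_norm_le _ _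
  rw [norm_smul, ntwo] at h
  linarith

lemma PG2 {u v : ℂ × ℂ} {ρ : ℝ} (hu : ‖u‖ ≤ ρ) (hv : ‖v‖ ≤ ρ) (hρ : ρ ≤ 1) :
    ‖G u - G v‖ ≤ (2+24*ρ)*‖u-v‖ := by
  have h0 : (0:ℝ) ≤ ρ := (norm_nonneg u).trans hu
  have d1 : ‖u.1 - v.1‖ ≤ ‖u-v‖ := nfst (u-v)
  have d2 : ‖u.2 - v.2‖ ≤ ‖u-v‖ := nsnd (u-v)
  have hd0 : (0:ℝ) ≤ ‖u-v‖ := norm_nonneg _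
  have hu2 : ‖u.2‖ ≤ ρ := (nsnd u).trans hu
  have hv2 : ‖v.2‖ ≤ ρ := (nsnd v).trans hv
  have hPu : ‖2*u.1 + u.2*u.2‖ ≤ 3*ρ := by
    calc ‖2*u.1 + u.2*u.2‖ ≤ ‖2*u.1‖ + ‖u.2*u.2‖ := norm_add_le _ _
      _ = 2*‖u.1‖ + ‖u.2‖*‖u.2‖ := by simp [norm_mul, ntwo]
      _ ≤ 2*ρ + ρ*1 := by
          have := mul_le_mul hu2 (hu2.trans hρ) (norm_nonneg _) h0
          have := (nfst u).trans hu
          linarith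
      _ ≤ 3*ρ := by linarith
  have hPv : ‖2*v.1 + v.2*v.2‖ ≤ 3*ρ := by
    calc ‖2*v.1 + v.2*v.2‖ ≤ ‖2*v.1‖ + ‖v.2*v.2‖ := norm_add_le _ _
      _ = 2*‖v.1‖ + ‖v.2‖*‖v.2‖ := by simp [norm_mul, ntwo]
      _ ≤ 2*ρ + ρ*1 := by
          have := mul_le_mul hv2 (hv2.trans hρ) (norm_nonneg _) h0
          have := (nfst v).trans hv
          linarith
      _ ≤ 3*ρ := by linarith
  have hdP : ‖(2*u.1 + u.2*u.2) - (2*v.1 + v.2*v.2)‖ ≤ 4*‖u-v‖ := by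
    have e : (2*u.1 + u.2*u.2) - (2*v.1 + v.2*v.2)
        = 2*(u.1-v.1) + (u.2+v.2)*(u.2-v.2) := by ring
    rw [e]
    calc ‖2*(u.1-v.1) + (u.2+v.2)*(u.2-v.2)‖
        ≤ ‖2*(u.1-v.1)‖ + ‖(u.2+v.2)*(u.2-v.2)‖ := norm_add_le _ _
      _ = 2*‖u.1-v.1‖ + ‖u.2+v.2‖*‖u.2-v.2‖ := by simp [norm_mul, ntwo]
      _ ≤ 2*‖u-v‖ + (2*ρ)*‖u-v‖ := by
          have hs : ‖u.2+v.2‖ ≤ 2*ρ := by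
            have := norm_add_le u.2 v.2; linarith
          have := mul_le_mul hs d2 (norm_nonneg _) (by positivity)
          linarith
      _ ≤ 4*‖u-v‖ := by nlinarith
  have e : G u - G v
      = ((2*(u.1-v.1) + (u.2+v.2)*(u.2-v.2)),
         (2*(u.2-v.2) + ((2*u.1 + u.2*u.2) + (2*v.1 + v.2*v.2))*((2*u.1 + u.2*u.2) - (2*v.1 + v.2*v.2)))) := by
    simp only [G, Prod.mk_sub_mk, Prod.mk.injEq]
    constructor <;> ring
  rw [e]
  refine npair _ _ ?_ ?_
  · calc ‖2*(u.1-v.1) + (u.2+v.2)*(u.2-v.2)‖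
        ≤ ‖2*(u.1-v.1)‖ + ‖(u.2+v.2)*(u.2-v.2)‖ := norm_add_le _ _
      _ = 2*‖u.1-v.1‖ + ‖u.2+v.2‖*‖u.2-v.2‖ := by simp [norm_mul, ntwo]
      _ ≤ (2+24*ρ)*‖u-v‖ := by
          have hs : ‖u.2+v.2‖ ≤ 2*ρ := by
            have := norm_add_le u.2 v.2; linarith
          have := mul_le_mul hs d2 (norm_nonneg _) (by positivity)
          nlinarith
  · calc ‖2*(u.2-v.2) + ((2*u.1 + u.2*u.2) + (2*v.1 + v.2*v.2))*((2*u.1 + u.2*u.2) - (2*v.1 + v.2*v.2))‖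
        ≤ ‖2*(u.2-v.2)‖ + ‖((2*u.1 + u.2*u.2) + (2*v.1 + v.2*v.2))‖*‖((2*u.1 + u.2*u.2) - (2*v.1 + v.2*v.2))‖ := by
          rw [← norm_mul]; exact norm_add_le _ _
      _ ≤ 2*‖u-v‖ + (6*ρ)*(4*‖u-v‖) := by
          have hs : ‖(2*u.1 + u.2*u.2) + (2*v.1 + v.2*v.2)‖ ≤ 6*ρ := by
            have := norm_add_le (2*u.1 + u.2*u.2) (2*v.1 + v.2*v.2); linarith
          have := mul_le_mul hs hdP (norm_nonneg _) (by positivity)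
          have e2 : ‖2*(u.2-v.2)‖ = 2*‖u.2-v.2‖ := by simp [norm_mul, ntwo]
          linarith
      _ = (2+24*ρ)*‖u-v‖ := by ring
lemma normL {y u : ℂ × ℂ} (hy : ‖y‖ ≤ 1) : ‖2*u.1 + 2*y.2*u.2‖ ≤ 4*‖u‖ := by
  have h2 : ‖y.2‖ ≤ 1 := (nsnd y).trans hy
  calc ‖2*u.1 + 2*y.2*u.2‖ ≤ ‖2*u.1‖ + ‖2*y.2*u.2‖ := norm_add_le _ _
    _ = 2*‖u.1‖ + 2*(‖y.2‖*‖u.2‖) := by simp [norm_mul, ntwo]; ring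
    _ ≤ 2*‖u‖ + 2*(1*‖u‖) := by
        have := mul_le_mul h2 (nsnd u) (norm_nonneg _) zero_le_one
        have := nfst u
        linarith
    _ = 4*‖u‖ := by ring

lemma PA1 {y : ℂ × ℂ} (u : ℂ × ℂ) (hy : ‖y‖ ≤ 1) :
    ‖A y u - (2:ℂ)•u‖ ≤ 24*‖y‖*‖u‖ := by
  have h0 : (0:ℝ) ≤ ‖y‖ := norm_nonneg _
  have hu0 : (0:ℝ) ≤ ‖u‖ := norm_nonneg _
  have e : A y u - (2:ℂ)•u
      = (2*y.2*u.2, 2*(2*y.1+y.2*y.2)*(2*u.1 + 2*y.2*u.2)) := by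
    rw [A_apply]
    simp only [Prod.smul_def, Prod.mk_sub_mk, smul_eq_mul, Prod.mk.injEq]
    constructor <;> ring
  rw [e]
  refine npair _ _ ?_ ?_
  · have : ‖2*y.2*u.2‖ = 2*(‖y.2‖*‖u.2‖) := by simp [norm_mul, ntwo]; ring
    rw [this]
    have := mul_le_mul (nsnd y) (nsnd u) (norm_nonneg _) h0
    nlinarith
  · have e2 : ‖2*(2*y.1+y.2*y.2)*(2*u.1 + 2*y.2*u.2)‖
        = 2*(‖2*y.1+y.2*y.2‖*‖2*u.1 + 2*y.2*u.2‖) := by simp [norm_mul, ntwo]; ring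
    rw [e2]
    have := mul_le_mul (normP hy) (normL hy (u := u)) (norm_nonneg _) (by positivity)
    nlinarith

lemma PA3 {y : ℂ × ℂ} (u : ℂ × ℂ) (hy : ‖y‖ ≤ 1) :
    ‖A y u‖ ≤ (2 + 24*‖y‖)*‖u‖ := by
  have h := PA1 u hy
  have h2 : ‖A y u‖ - ‖(2:ℂ)•u‖ ≤ ‖A y u - (2:ℂ)•u‖ := norm_sub_norm_le _ _
  rw [norm_smul, ntwo] at h2
  nlinarith [norm_nonneg u, norm_nonneg y]

lemma PA2 {y y' : ℂ × ℂ} (u : ℂ × ℂ) (hy : ‖y‖ ≤ 1) (hy' : ‖y'‖ ≤ 1) :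
    ‖A y u - A y' u‖ ≤ 50*‖y-y'‖*‖u‖ := by
  have hu0 : (0:ℝ) ≤ ‖u‖ := norm_nonneg _
  have hd0 : (0:ℝ) ≤ ‖y-y'‖ := norm_nonneg _
  have d1 : ‖y.1 - y'.1‖ ≤ ‖y-y'‖ := nfst (y-y')
  have d2 : ‖y.2 - y'.2‖ ≤ ‖y-y'‖ := nsnd (y-y')
  have hdP : ‖(2*y.1 + y.2*y.2) - (2*y'.1 + y'.2*y'.2)‖ ≤ 4*‖y-y'‖ := by
    have e : (2*y.1 + y.2*y.2) - (2*y'.1 + y'.2*y'.2)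
        = 2*(y.1-y'.1) + (y.2+y'.2)*(y.2-y'.2) := by ring
    rw [e]
    have hs : ‖y.2+y'.2‖ ≤ 2 := by
      have := norm_add_le y.2 y'.2
      have := (nsnd y).trans hy; have := (nsnd y').trans hy'
      linarith
    calc ‖2*(y.1-y'.1) + (y.2+y'.2)*(y.2-y'.2)‖
        ≤ ‖2*(y.1-y'.1)‖ + ‖(y.2+y'.2)*(y.2-y'.2)‖ := norm_add_le _ _
      _ = 2*‖y.1-y'.1‖ + ‖y.2+y'.2‖*‖y.2-y'.2‖ := by simp [norm_mul, ntwo]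
      _ ≤ 2*‖y-y'‖ + 2*‖y-y'‖ := by
          have := mul_le_mul hs d2 (norm_nonneg _) (by norm_num)
          linarith
      _ = 4*‖y-y'‖ := by ring
  have e : A y u - A y' u
      = (2*(y.2-y'.2)*u.2,
        2*(((2*y.1 + y.2*y.2) - (2*y'.1 + y'.2*y'.2))*(2*u.1 + 2*y.2*u.2)
          + (2*y'.1 + y'.2*y'.2)*(2*(y.2-y'.2)*u.2))) := by
    rw [A_apply, A_apply]
    simp only [Prod.mk_sub_mk, Prod.mk.injEq]
    constructor <;> ring
  rw [e]
  refine npair _ _ ?_ ?_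
  · have e2 : ‖2*(y.2-y'.2)*u.2‖ = 2*(‖y.2-y'.2‖*‖u.2‖) := by simp [norm_mul, ntwo]; ring
    rw [e2]
    have := mul_le_mul d2 (nsnd u) (norm_nonneg _) hd0
    nlinarith
  · have t1 : ‖((2*y.1 + y.2*y.2) - (2*y'.1 + y'.2*y'.2))*(2*u.1 + 2*y.2*u.2)‖
        ≤ (4*‖y-y'‖)*(4*‖u‖) := by
      rw [norm_mul]
      exact mul_le_mul hdP (normL hy) (norm_nonneg _) (by positivity)
    have t2 : ‖(2*y'.1 + y'.2*y'.2)*(2*(y.2-y'.2)*u.2)‖ ≤ 3*(2*(‖y-y'‖*‖u‖)) := by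
      rw [norm_mul]
      have e3 : ‖2*(y.2-y'.2)*u.2‖ = 2*(‖y.2-y'.2‖*‖u.2‖) := by simp [norm_mul, ntwo]; ring
      rw [e3]
      have hb : ‖2*(y.2-y'.2)*u.2‖ ≤ 2*(‖y-y'‖*‖u‖) := by
        rw [e3]
        have := mul_le_mul d2 (nsnd u) (norm_nonneg _) hd0
        linarith
      rw [e3] at hb
      calc ‖2*y'.1 + y'.2*y'.2‖ * (2*(‖y.2-y'.2‖*‖u.2‖))
          ≤ (3*‖y'‖) * (2*(‖y.2-y'.2‖*‖u.2‖)) := by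
            refine mul_le_mul_of_nonneg_right (normP hy') (by positivity)
        _ ≤ 3 * (2*(‖y.2-y'.2‖*‖u.2‖)) := by
            have h3 : 3*‖y'‖ ≤ 3 := by linarith
            exact mul_le_mul_of_nonneg_right h3 (by positivity)
        _ ≤ 3 * (2*(‖y-y'‖*‖u‖)) := by
            have := mul_le_mul d2 (nsnd u) (norm_nonneg _) hd0
            linarith
    calc ‖2*(((2*y.1 + y.2*y.2) - (2*y'.1 + y'.2*y'.2))*(2*u.1 + 2*y.2*u.2)
          + (2*y'.1 + y'.2*y'.2)*(2*(y.2-y'.2)*u.2))‖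
        ≤ 2*(‖((2*y.1 + y.2*y.2) - (2*y'.1 + y'.2*y'.2))*(2*u.1 + 2*y.2*u.2)‖
          + ‖(2*y'.1 + y'.2*y'.2)*(2*(y.2-y'.2)*u.2)‖) := by
          rw [norm_mul, ntwo]
          have := norm_add_le (((2*y.1 + y.2*y.2) - (2*y'.1 + y'.2*y'.2))*(2*u.1 + 2*y.2*u.2))
            ((2*y'.1 + y'.2*y'.2)*(2*(y.2-y'.2)*u.2))
          linarith
      _ ≤ 50*‖y-y'‖*‖u‖ := by nlinarith
def c : ℂ := (2:ℂ)⁻¹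
lemma norm_c : ‖c‖ = 1/2 := by
  rw [c, norm_inv]; norm_num
lemma nsmul_c (x : ℂ × ℂ) : ‖c • x‖ = ‖x‖/2 := by
  rw [norm_smul, norm_c]; ring
lemma two_smul_c (x : ℂ × ℂ) : (2:ℂ) • (c • x) = x := by
  rw [smul_smul, c]; norm_num

def hseq : ℕ → (ℂ × ℂ) → (ℂ × ℂ)
  | 0 => fun x => x
  | n+1 => fun x => G (hseq n (c • x))

def Dseq : ℕ → (ℂ × ℂ) → ((ℂ × ℂ) →L[ℂ] (ℂ × ℂ))
  | 0 => fun _ => ContinuousLinearMap.id ℂ (ℂ × ℂ)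
  | n+1 => fun x => ((A (hseq n (c • x))).comp (Dseq n (c • x))).comp
      (c • ContinuousLinearMap.id ℂ (ℂ × ℂ))

lemma Dseq_succ_apply (n : ℕ) (x u : ℂ × ℂ) :
    Dseq (n+1) x u = c • (A (hseq n (c • x)) (Dseq n (c • x) u)) := by
  simp only [Dseq, ContinuousLinearMap.comp_apply, ContinuousLinearMap.smul_apply,
    ContinuousLinearMap.id_apply, map_smul]

lemma HD (n : ℕ) : ∀ x : ℂ × ℂ, HasFDerivAt (hseq n) (Dseq n x) x := by
  induction n with
  | zero => intro x; exact hasFDerivAt_id x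
  | succ n ih =>
    intro x
    have hsm : HasFDerivAt (fun x : ℂ × ℂ => c • x) (c • ContinuousLinearMap.id ℂ (ℂ × ℂ)) x := by
      have := (c • ContinuousLinearMap.id ℂ (ℂ × ℂ)).hasFDerivAt (x := x)
      exact (hasFDerivAt_id x).const_smul c
    have := ((hasFDerivAt_G (hseq n (c • x))).comp (c • x) (ih (c • x))).comp x hsm
    exact this

def r0 : ℝ := 1/2048

lemma H1 (n : ℕ) : ∀ x : ℂ × ℂ, ‖x‖ ≤ r0 → ‖hseq n x‖ ≤ ‖x‖*(1+100*‖x‖) := by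
  induction n with
  | zero =>
    intro x hx
    have := norm_nonneg x
    simp only [hseq]
    nlinarith
  | succ n ih =>
    intro x hx
    have ha0 : (0:ℝ) ≤ ‖x‖ := norm_nonneg x
    have hr : r0 = 1/2048 := rfl
    have hy : ‖c • x‖ ≤ r0 := by rw [nsmul_c]; linarith
    have hu := ih (c • x) hy
    rw [nsmul_c] at hu
    have hu1 : ‖hseq n (c • x)‖ ≤ 1 := by nlinarith
    have hG := PG1' hu1
    have e : ‖hseq (n+1) x‖ = ‖G (hseq n (c • x))‖ := rfl
    rw [e]
    have hx' : ‖x‖ ≤ 1/2048 := by rw [hr] at hx; exact hx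
    have hU0 : (0:ℝ) ≤ ‖hseq n (c • x)‖ := norm_nonneg _
    have hUa : ‖hseq n (c • x)‖ ≤ ‖x‖ := by nlinarith
    have hsq : ‖hseq n (c•x)‖^2 = ‖hseq n (c•x)‖*‖hseq n (c•x)‖ := by ring
    have hUsq : ‖hseq n (c•x)‖*‖hseq n (c•x)‖ ≤ ‖x‖*‖x‖ :=
      mul_le_mul hUa hUa hU0 ha0
    nlinarith

lemma H2 (n : ℕ) : ∀ x : ℂ × ℂ, ‖x‖ ≤ r0 →
    ‖hseq (n+1) x - hseq n x‖ ≤ 3*(1/2)^n*‖x‖^2*(1+100*‖x‖) := by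
  induction n with
  | zero =>
    intro x hx
    have ha0 : (0:ℝ) ≤ ‖x‖ := norm_nonneg x
    have hy1 : ‖c • x‖ ≤ 1 := by rw [nsmul_c]; rw [r0] at hx; linarith
    have h := PG1 hy1
    rw [two_smul_c, nsmul_c] at h
    have e : hseq 1 x - hseq 0 x = G (c • x) - x := rfl
    rw [e]
    nlinarith
  | succ n ih =>
    intro x hx
    have ha0 : (0:ℝ) ≤ ‖x‖ := norm_nonneg x
    have hr : r0 = 1/2048 := rfl
    have hy : ‖c • x‖ ≤ r0 := by rw [nsmul_c]; linarith
    have h1 := H1 n (c • x) hy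
    have h2 := H1 (n+1) (c • x) hy
    rw [nsmul_c] at h1 h2
    have hbound : ∀ m, ‖hseq m (c•x)‖ ≤ ‖x‖/2*(1+100*(‖x‖/2)) → ‖hseq m (c•x)‖ ≤ ‖x‖ := by
      intro m h; nlinarith
    have hb1 : ‖hseq n (c•x)‖ ≤ ‖x‖ := hbound n h1
    have hb2 : ‖hseq (n+1) (c•x)‖ ≤ ‖x‖ := hbound (n+1) h2
    have hx1 : ‖x‖ ≤ 1 := by rw [r0] at hx; linarith
    have hlip := PG2 hb2 hb1 hx1
    have ihy := ih (c • x) hy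
    rw [nsmul_c] at ihy
    have e : hseq (n+1+1) x - hseq (n+1) x = G (hseq (n+1) (c•x)) - G (hseq n (c•x)) := rfl
    rw [e]
    have hd0 : (0:ℝ) ≤ ‖hseq (n+1) (c•x) - hseq n (c•x)‖ := norm_nonneg _
    have hp : (0:ℝ) < (1/2:ℝ)^n := by positivity
    calc ‖G (hseq (n+1) (c•x)) - G (hseq n (c•x))‖
        ≤ (2+24*‖x‖)*‖hseq (n+1) (c•x) - hseq n (c•x)‖ := hlip
      _ ≤ (2+24*‖x‖)*(3*(1/2)^n*(‖x‖/2)^2*(1+100*(‖x‖/2))) := by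
          refine mul_le_mul_of_nonneg_left ihy (by linarith)
      _ ≤ 3*(1/2)^(n+1)*‖x‖^2*(1+100*‖x‖) := by
          have hx' : ‖x‖ ≤ 1/2048 := by rw [hr] at hx; exact hx
          have key : (2+24*‖x‖)*((‖x‖/2)^2*(1+100*(‖x‖/2)))
              ≤ (1/2)*(‖x‖^2*(1+100*‖x‖)) := by
            have cube : ‖x‖^3 ≤ (1/2048)*‖x‖^2 := by nlinarith [sq_nonneg ‖x‖]
            have quart : ‖x‖^4 ≤ (1/2048)*‖x‖^3 := by
              nlinarith [sq_nonneg ‖x‖, mul_nonneg (mul_nonneg ha0 ha0) ha0]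
            nlinarith [mul_nonneg (mul_nonneg ha0 ha0) ha0]
          calc (2+24*‖x‖)*(3*(1/2)^n*(‖x‖/2)^2*(1+100*(‖x‖/2)))
              = 3*(1/2)^n*((2+24*‖x‖)*((‖x‖/2)^2*(1+100*(‖x‖/2)))) := by ring
            _ ≤ 3*(1/2)^n*((1/2)*(‖x‖^2*(1+100*‖x‖))) := by
                refine mul_le_mul_of_nonneg_left key (by positivity)
            _ = 3*(1/2)^(n+1)*‖x‖^2*(1+100*‖x‖) := by rw [pow_succ]; ring

lemma H3 (n : ℕ) : ∀ x u : ℂ × ℂ, ‖x‖ ≤ r0 → ‖Dseq n x u‖ ≤ (1+100*‖x‖)*‖u‖ := by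
  induction n with
  | zero =>
    intro x u hx
    simp only [Dseq, ContinuousLinearMap.id_apply]
    have := norm_nonneg u; have := norm_nonneg x
    nlinarith
  | succ n ih =>
    intro x u hx
    have ha0 : (0:ℝ) ≤ ‖x‖ := norm_nonneg x
    have hu0 : (0:ℝ) ≤ ‖u‖ := norm_nonneg u
    have hr : r0 = 1/2048 := rfl
    have hx' : ‖x‖ ≤ 1/2048 := by rw [hr] at hx; exact hx
    have hy : ‖c • x‖ ≤ r0 := by rw [nsmul_c]; linarith
    have hw := H1 n (c • x) hy
    rw [nsmul_c] at hw
    have hw1 : ‖hseq n (c • x)‖ ≤ 1 := by nlinarith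
    have hD := ih (c • x) u hy
    rw [nsmul_c] at hD
    rw [Dseq_succ_apply, norm_smul, norm_c]
    have hA := PA3 (Dseq n (c • x) u) hw1
    have hD0 : (0:ℝ) ≤ ‖Dseq n (c • x) u‖ := norm_nonneg _
    have step : ‖A (hseq n (c•x)) (Dseq n (c•x) u)‖
        ≤ (2 + 24*(‖x‖/2*(1+100*(‖x‖/2))))*((1+100*(‖x‖/2))*‖u‖) := by
      calc ‖A (hseq n (c•x)) (Dseq n (c•x) u)‖
          ≤ (2 + 24*‖hseq n (c•x)‖)*‖Dseq n (c•x) u‖ := hA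
        _ ≤ (2 + 24*(‖x‖/2*(1+100*(‖x‖/2))))*((1+100*(‖x‖/2))*‖u‖) := by
            refine mul_le_mul (by linarith) hD hD0 (by positivity)
    have final : (1/2)*((2 + 24*(‖x‖/2*(1+100*(‖x‖/2))))*((1+100*(‖x‖/2))*‖u‖))
        ≤ (1+100*‖x‖)*‖u‖ := by
      have key : (1/2)*((2 + 24*(‖x‖/2*(1+100*(‖x‖/2))))*(1+100*(‖x‖/2))) ≤ 1+100*‖x‖ := by
        nlinarith [mul_nonneg ha0 ha0, mul_nonneg (mul_nonneg ha0 ha0) ha0]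
      calc (1/2)*((2 + 24*(‖x‖/2*(1+100*(‖x‖/2))))*((1+100*(‖x‖/2))*‖u‖))
          = ((1/2)*((2 + 24*(‖x‖/2*(1+100*(‖x‖/2))))*(1+100*(‖x‖/2))))*‖u‖ := by ring
        _ ≤ (1+100*‖x‖)*‖u‖ := mul_le_mul_of_nonneg_right key hu0
    calc 1/2 * ‖A (hseq n (c•x)) (Dseq n (c•x) u)‖
        ≤ (1/2)*((2 + 24*(‖x‖/2*(1+100*(‖x‖/2))))*((1+100*(‖x‖/2))*‖u‖)) := by linarith
      _ ≤ (1+100*‖x‖)*‖u‖ := final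

lemma H4 (n : ℕ) : ∀ x u : ℂ × ℂ, ‖x‖ ≤ r0 →
    ‖Dseq (n+1) x u - Dseq n x u‖ ≤ 6*(1/2)^n*‖x‖*(1+2000*‖x‖)*‖u‖ := by
  induction n with
  | zero =>
    intro x u hx
    have ha0 : (0:ℝ) ≤ ‖x‖ := norm_nonneg x
    have hu0 : (0:ℝ) ≤ ‖u‖ := norm_nonneg u
    have hx' : ‖x‖ ≤ 1/2048 := hx
    have hy1 : ‖c • x‖ ≤ 1 := by rw [nsmul_c]; linarith
    have e : Dseq 1 x u - Dseq 0 x u = c • (A (c • x) u - (2:ℂ)•u) := by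
      rw [Dseq_succ_apply]
      show c • (A (hseq 0 (c • x))) u - u = _
      have h0 : hseq 0 (c • x) = c • x := rfl
      rw [h0, smul_sub, smul_smul]
      norm_num [c]
    rw [e, norm_smul, norm_c]
    have := PA1 u hy1
    rw [nsmul_c] at this
    nlinarith [mul_nonneg ha0 hu0, mul_nonneg (mul_nonneg ha0 ha0) hu0]
  | succ n ih =>
    intro x u hx
    have ha0 : (0:ℝ) ≤ ‖x‖ := norm_nonneg x
    have hu0 : (0:ℝ) ≤ ‖u‖ := norm_nonneg u
    have hx' : ‖x‖ ≤ 1/2048 := hx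
    have hy : ‖c • x‖ ≤ r0 := by rw [nsmul_c]; exact by rw [r0] at hx ⊢; linarith
    set y := c • x with hy_def
    have hny : ‖y‖ = ‖x‖/2 := nsmul_c x
    -- the two centers
    have hw0 := H1 n y hy
    have hw1 := H1 (n+1) y hy
    rw [hny] at hw0 hw1
    have hw0a : ‖hseq n y‖ ≤ ‖x‖ := by nlinarith
    have hw1a : ‖hseq (n+1) y‖ ≤ ‖x‖ := by nlinarith
    have hw0b : ‖hseq n y‖ ≤ 1 := by linarith
    have hw1b : ‖hseq (n+1) y‖ ≤ 1 := by linarith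
    have hdw := H2 n y hy
    rw [hny] at hdw
    have hDn1 := H3 (n+1) y u hy
    rw [hny] at hDn1
    have hdD := ih y u hy
    rw [hny] at hdD
    have e : Dseq (n+2) x u - Dseq (n+1) x u
        = c • ((A (hseq (n+1) y) (Dseq (n+1) y u) - A (hseq n y) (Dseq (n+1) y u))
             + (A (hseq n y) (Dseq (n+1) y u) - A (hseq n y) (Dseq n y u))) := by
      rw [Dseq_succ_apply (n+1) x u, Dseq_succ_apply n x u, ← smul_sub]
      congr 1
      abel
    rw [e, norm_smul, norm_c]
    have t1 : ‖A (hseq (n+1) y) (Dseq (n+1) y u) - A (hseq n y) (Dseq (n+1) y u)‖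
        ≤ 50*(3*(1/2)^n*(‖x‖/2)^2*(1+100*(‖x‖/2)))*((1+100*(‖x‖/2))*‖u‖) := by
      have := PA2 (Dseq (n+1) y u) hw1b hw0b
      calc ‖A (hseq (n+1) y) (Dseq (n+1) y u) - A (hseq n y) (Dseq (n+1) y u)‖
          ≤ 50*‖hseq (n+1) y - hseq n y‖*‖Dseq (n+1) y u‖ := this
        _ ≤ 50*(3*(1/2)^n*(‖x‖/2)^2*(1+100*(‖x‖/2)))*((1+100*(‖x‖/2))*‖u‖) := by
            have h50 : (0:ℝ) ≤ 50 := by norm_num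
            refine mul_le_mul (by linarith [hdw]) hDn1 (norm_nonneg _) (by positivity)
    have t2 : ‖A (hseq n y) (Dseq (n+1) y u) - A (hseq n y) (Dseq n y u)‖
        ≤ (2+24*‖x‖)*(6*(1/2)^n*(‖x‖/2)*(1+2000*(‖x‖/2))*‖u‖) := by
      have e2 : A (hseq n y) (Dseq (n+1) y u) - A (hseq n y) (Dseq n y u)
          = A (hseq n y) (Dseq (n+1) y u - Dseq n y u) := by rw [map_sub]
      rw [e2]
      have := PA3 (Dseq (n+1) y u - Dseq n y u) hw0b
      calc ‖A (hseq n y) (Dseq (n+1) y u - Dseq n y u)‖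
          ≤ (2 + 24*‖hseq n y‖)*‖Dseq (n+1) y u - Dseq n y u‖ := this
        _ ≤ (2+24*‖x‖)*(6*(1/2)^n*(‖x‖/2)*(1+2000*(‖x‖/2))*‖u‖) := by
            refine mul_le_mul (by linarith) hdD (norm_nonneg _) (by linarith)
    have hq : (0:ℝ) < (1/2)^n := by positivity
    have tri := norm_add_le (A (hseq (n+1) y) (Dseq (n+1) y u) - A (hseq n y) (Dseq (n+1) y u))
      (A (hseq n y) (Dseq (n+1) y u) - A (hseq n y) (Dseq n y u))
    have key : 50*(3*((‖x‖/2)^2*(1+100*(‖x‖/2))))*((1+100*(‖x‖/2)))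
        + (2+24*‖x‖)*(6*((‖x‖/2)*(1+2000*(‖x‖/2))))
        ≤ 6*‖x‖*(1+2000*‖x‖) := by
      nlinarith [mul_nonneg ha0 ha0, mul_nonneg (mul_nonneg ha0 ha0) ha0,
        mul_nonneg (mul_nonneg (mul_nonneg ha0 ha0) ha0) ha0]
    calc 1/2*‖(A (hseq (n+1) y) (Dseq (n+1) y u) - A (hseq n y) (Dseq (n+1) y u))
             + (A (hseq n y) (Dseq (n+1) y u) - A (hseq n y) (Dseq n y u))‖
        ≤ 1/2*(50*(3*(1/2)^n*(‖x‖/2)^2*(1+100*(‖x‖/2)))*((1+100*(‖x‖/2))*‖u‖)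
             + (2+24*‖x‖)*(6*(1/2)^n*(‖x‖/2)*(1+2000*(‖x‖/2))*‖u‖)) := by linarith
      _ = (1/2)*(1/2)^n*((50*(3*((‖x‖/2)^2*(1+100*(‖x‖/2))))*((1+100*(‖x‖/2)))
             + (2+24*‖x‖)*(6*((‖x‖/2)*(1+2000*(‖x‖/2)))))*‖u‖) := by ring
      _ ≤ (1/2)*(1/2)^n*((6*‖x‖*(1+2000*‖x‖))*‖u‖) := by
          refine mul_le_mul_of_nonneg_left ?_ (by positivity)
          exact mul_le_mul_of_nonneg_right key hu0
      _ = 6*(1/2)^(n+1)*‖x‖*(1+2000*‖x‖)*‖u‖ := by rw [pow_succ]; ring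

-- operator norm version of H4
lemma H4' (n : ℕ) (x : ℂ × ℂ) (hx : ‖x‖ ≤ r0) :
    ‖Dseq (n+1) x - Dseq n x‖ ≤ 12*r0*(1/2)^n := by
  refine ContinuousLinearMap.opNorm_le_bound _ (by rw [r0]; positivity) (fun u => ?_)
  have h := H4 n x u hx
  rw [ContinuousLinearMap.sub_apply]
  have ha0 : (0:ℝ) ≤ ‖x‖ := norm_nonneg x
  have hx' : ‖x‖ ≤ 1/2048 := hx
  have hu0 : (0:ℝ) ≤ ‖u‖ := norm_nonneg u
  have hq : (0:ℝ) < (1/2)^n := by positivity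
  have key : 6*‖x‖*(1+2000*‖x‖) ≤ 12*r0 := by rw [r0]; nlinarith
  calc ‖Dseq (n+1) x u - Dseq n x u‖ ≤ 6*(1/2)^n*‖x‖*(1+2000*‖x‖)*‖u‖ := h
    _ = (6*‖x‖*(1+2000*‖x‖))*(1/2)^n*‖u‖ := by ring
    _ ≤ (12*r0)*(1/2)^n*‖u‖ := by
        refine mul_le_mul_of_nonneg_right (mul_le_mul_of_nonneg_right key hq.le) hu0
    _ = 12*r0*(1/2)^n*‖u‖ := by ring

lemma hseq_cauchy (x : ℂ × ℂ) (hx : ‖x‖ ≤ r0) : CauchySeq (fun n => hseq n x) := by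
  refine cauchySeq_of_le_geometric (1/2) (3*‖x‖^2*(1+100*‖x‖)) (by norm_num) (fun n => ?_)
  rw [dist_eq_norm, norm_sub_rev]
  calc ‖hseq (n+1) x - hseq n x‖ ≤ 3*(1/2)^n*‖x‖^2*(1+100*‖x‖) := H2 n x hx
    _ = 3*‖x‖^2*(1+100*‖x‖)*(1/2)^n := by ring

def h0 (x : ℂ × ℂ) : ℂ × ℂ := limUnder atTop (fun n => hseq n x)

lemma h0_tendsto (x : ℂ × ℂ) (hx : ‖x‖ ≤ r0) :
    Tendsto (fun n => hseq n x) atTop (𝓝 (h0 x)) :=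
  (hseq_cauchy x hx).tendsto_limUnder

lemma Dseq_cauchy (x : ℂ × ℂ) (hx : ‖x‖ ≤ r0) : CauchySeq (fun n => Dseq n x) := by
  refine cauchySeq_of_le_geometric (1/2) (12*r0) (by norm_num) (fun n => ?_)
  rw [dist_eq_norm, norm_sub_rev]
  calc ‖Dseq (n+1) x - Dseq n x‖ ≤ 12*r0*(1/2)^n := H4' n x hx
    _ = 12*r0*(1/2)^n := rfl

def D0 (x : ℂ × ℂ) : (ℂ × ℂ) →L[ℂ] (ℂ × ℂ) := limUnder atTop (fun n => Dseq n x)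

lemma D0_tendsto (x : ℂ × ℂ) (hx : ‖x‖ ≤ r0) :
    Tendsto (fun n => Dseq n x) atTop (𝓝 (D0 x)) :=
  (Dseq_cauchy x hx).tendsto_limUnder

lemma D0_unif : TendstoUniformlyOn Dseq D0 atTop (Metric.ball (0:ℂ × ℂ) r0) := by
  rw [Metric.tendstoUniformlyOn_iff]
  intro ε hε
  have ht : Tendsto (fun n : ℕ => 24*r0*(1/2)^n) atTop (𝓝 0) := by
    have := tendsto_pow_atTop_nhds_zero_of_lt_one (by norm_num : (0:ℝ) ≤ 1/2) (by norm_num : (1/2:ℝ) < 1)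
    simpa using this.const_mul (24*r0)
  have hev : ∀ᶠ n in atTop, 24*r0*(1/2)^n < ε := by
    filter_upwards [ht.eventually (gt_mem_nhds hε)] with n hn using hn
  filter_upwards [hev] with n hn x hx
  have hx' : ‖x‖ ≤ r0 := by
    rw [Metric.mem_ball, dist_zero_right] at hx
    exact hx.le
  have hd : ∀ m, dist (Dseq m x) (Dseq (m+1) x) ≤ (12*r0) * (1/2)^m := by
    intro m
    rw [dist_eq_norm, norm_sub_rev]
    exact H4' m x hx'
  have := dist_le_of_le_geometric_of_tendsto (1/2) (12*r0) (by norm_num) hd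
    (D0_tendsto x hx') n
  calc dist (D0 x) (Dseq n x) = dist (Dseq n x) (D0 x) := dist_comm _ _
    _ ≤ 12*r0*(1/2)^n/(1-1/2) := this
    _ = 24*r0*(1/2)^n := by norm_num; ring
    _ < ε := hn

lemma h0_hasFDeriv {x : ℂ × ℂ} (hx : x ∈ Metric.ball (0:ℂ × ℂ) r0) :
    HasFDerivAt h0 (D0 x) x := by
  refine hasFDerivAt_of_tendstoUniformlyOn Metric.isOpen_ball D0_unif
    (fun n y _ => HD n y) (fun y hy => ?_) hx
  refine h0_tendsto y ?_
  rw [Metric.mem_ball, dist_zero_right] at hy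
  exact hy.le

lemma h0_close (x : ℂ × ℂ) (hx : ‖x‖ ≤ r0) : ‖h0 x - x‖ ≤ 7*‖x‖^2 := by
  have hd : ∀ m, dist (hseq m x) (hseq (m+1) x) ≤ (3*‖x‖^2*(1+100*‖x‖)) * (1/2)^m := by
    intro m
    rw [dist_eq_norm, norm_sub_rev]
    calc ‖hseq (m+1) x - hseq m x‖ ≤ 3*(1/2)^m*‖x‖^2*(1+100*‖x‖) := H2 m x hx
      _ = 3*‖x‖^2*(1+100*‖x‖)*(1/2)^m := by ring
  have h := dist_le_of_le_geometric_of_tendsto₀ (1/2) (3*‖x‖^2*(1+100*‖x‖))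
    (by norm_num) hd (h0_tendsto x hx)
  have e : hseq 0 x = x := rfl
  rw [e, dist_comm, dist_eq_norm] at h
  have ha0 : (0:ℝ) ≤ ‖x‖ := norm_nonneg x
  have hx' : ‖x‖ ≤ 1/2048 := hx
  have : 3*‖x‖^2*(1+100*‖x‖)/(1-1/2) = 6*‖x‖^2*(1+100*‖x‖) := by ring
  rw [this] at h
  nlinarith [sq_nonneg ‖x‖, mul_nonneg (mul_nonneg ha0 ha0) ha0]

lemma h0_funeq (y : ℂ × ℂ) (hy : ‖y‖ ≤ r0) : h0 y = G (h0 (c • y)) := by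
  have h1 : Tendsto (fun n => hseq (n+1) y) atTop (𝓝 (h0 y)) :=
    (h0_tendsto y hy).comp (tendsto_add_atTop_nat 1)
  have hcy : ‖c • y‖ ≤ r0 := by
    rw [nsmul_c]; rw [r0] at hy ⊢; linarith
  have h2 : Tendsto (fun n => hseq (n+1) y) atTop (𝓝 (G (h0 (c • y)))) := by
    have : (fun n => hseq (n+1) y) = fun n => G (hseq n (c • y)) := rfl
    rw [this]
    exact (cont_G.tendsto _).comp (h0_tendsto (c • y) hcy)
  exact tendsto_nhds_unique h1 h2

lemma D0_close (x : ℂ × ℂ) (hx : ‖x‖ ≤ r0) :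
    ‖D0 x - ContinuousLinearMap.id ℂ (ℂ × ℂ)‖ ≤ 1/4 := by
  have hd : ∀ m, dist (Dseq m x) (Dseq (m+1) x) ≤ (12*r0) * (1/2)^m := by
    intro m
    rw [dist_eq_norm, norm_sub_rev]
    exact H4' m x hx
  have h := dist_le_of_le_geometric_of_tendsto₀ (1/2) (12*r0)
    (by norm_num) hd (D0_tendsto x hx)
  have e : Dseq 0 x = ContinuousLinearMap.id ℂ (ℂ × ℂ) := rfl
  rw [e, dist_comm, dist_eq_norm] at h
  rw [r0] at h
  calc ‖D0 x - ContinuousLinearMap.id ℂ (ℂ × ℂ)‖ ≤ 12*(1/2048)*(1/2)^0/(1-1/2) := by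
        simpa using h
    _ ≤ 1/4 := by norm_num

lemma h0_lip {p q : ℂ × ℂ} (hp : p ∈ Metric.ball (0:ℂ × ℂ) r0) (hq : q ∈ Metric.ball (0:ℂ × ℂ) r0) :
    ‖(h0 p - p) - (h0 q - q)‖ ≤ (1/4)*‖p - q‖ := by
  have hder : ∀ z ∈ Metric.ball (0:ℂ × ℂ) r0,
      HasFDerivWithinAt (fun w => h0 w - w) (D0 z - ContinuousLinearMap.id ℂ (ℂ × ℂ))
        (Metric.ball (0:ℂ × ℂ) r0) z := by
    intro z hz
    exact ((h0_hasFDeriv hz).sub (hasFDerivAt_id z)).hasFDerivWithinAt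
  have hbound : ∀ z ∈ Metric.ball (0:ℂ × ℂ) r0,
      ‖D0 z - ContinuousLinearMap.id ℂ (ℂ × ℂ)‖ ≤ 1/4 := by
    intro z hz
    rw [Metric.mem_ball, dist_zero_right] at hz
    exact D0_close z hz.le
  have := (convex_ball (0:ℂ × ℂ) r0).norm_image_sub_le_of_norm_hasFDerivWithin_le
    hder hbound hq hp
  simpa using this

lemma h0_inj {p q : ℂ × ℂ} (hp : p ∈ Metric.ball (0:ℂ × ℂ) r0) (hq : q ∈ Metric.ball (0:ℂ × ℂ) r0)
    (h : h0 p = h0 q) : p = q := by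
  have hl := h0_lip hp hq
  have e : (h0 p - p) - (h0 q - q) = -(p - q) := by rw [h]; abel
  rw [e, norm_neg] at hl
  have h0' : (0:ℝ) ≤ ‖p - q‖ := norm_nonneg _
  have : ‖p - q‖ = 0 := by linarith
  exact sub_eq_zero.mp (norm_eq_zero.mp this)

-- scaling
def scl (n : ℕ) (x : ℂ × ℂ) : ℂ × ℂ := (c^n) • x
lemma nscl (n : ℕ) (x : ℂ × ℂ) : ‖scl n x‖ = ‖x‖/2^n := by
  rw [scl, norm_smul, norm_pow, norm_c, one_div, inv_pow]
  ring
lemma scl_zero (x : ℂ × ℂ) : scl 0 x = x := by rw [scl, pow_zero, one_smul]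
lemma scl_succ (n : ℕ) (x : ℂ × ℂ) : scl (n+1) x = scl n (c • x) := by
  rw [scl, scl, pow_succ, mul_smul]
lemma scl_succ' (n : ℕ) (x : ℂ × ℂ) : scl (n+1) x = c • scl n x := by
  rw [scl, scl, pow_succ', mul_smul]
lemma r0pos : (0:ℝ) < r0 := by rw [r0]; norm_num

lemma NNex (x : ℂ × ℂ) : ∃ n : ℕ, ‖x‖ < 2^n*(r0/2) := by
  obtain ⟨n, hn⟩ := pow_unbounded_of_one_lt (‖x‖/(r0/2)) (by norm_num : (1:ℝ) < 2)
  exact ⟨n, by rw [div_lt_iff₀ (by rw [r0]; norm_num : (0:ℝ) < r0/2)] at hn; linarith⟩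

def NX (x : ℂ × ℂ) : ℕ := @Nat.find _ (Classical.decPred _) (NNex x)
lemma NX_spec (x : ℂ × ℂ) : ‖x‖ < 2^(NX x)*(r0/2) :=
  @Nat.find_spec _ (Classical.decPred _) (NNex x)

def hG (x : ℂ × ℂ) : ℂ × ℂ := G^[NX x] (h0 (scl (NX x) x))

lemma cons (n : ℕ) (x : ℂ × ℂ) (hx : ‖x‖ < 2^n*(r0/2)) :
    G^[n+1] (h0 (scl (n+1) x)) = G^[n] (h0 (scl n x)) := by
  have hy : ‖scl n x‖ ≤ r0 := by
    rw [nscl]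
    have h2 : (0:ℝ) < 2^n := by positivity
    rw [div_le_iff₀ h2]
    refine le_of_lt (hx.trans_le ?_)
    rw [r0]; nlinarith
  have := h0_funeq (scl n x) hy
  rw [← scl_succ'] at this
  rw [Function.iterate_succ_apply G n, ← this]

lemma consMany (k n : ℕ) (x : ℂ × ℂ) (hx : ‖x‖ < 2^n*(r0/2)) :
    G^[n+k] (h0 (scl (n+k) x)) = G^[n] (h0 (scl n x)) := by
  induction k with
  | zero => rfl
  | succ k ih =>
    have hx' : ‖x‖ < 2^(n+k)*(r0/2) := by
      refine hx.trans_le ?_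
      have : (2:ℝ)^n ≤ 2^(n+k) := by
        refine pow_le_pow_right₀ (by norm_num) (by omega)
      nlinarith [r0pos]
    calc G^[n+(k+1)] (h0 (scl (n+(k+1)) x)) = G^[(n+k)+1] (h0 (scl ((n+k)+1) x)) := by
          norm_num [Nat.add_assoc]
      _ = G^[n+k] (h0 (scl (n+k) x)) := cons (n+k) x hx'
      _ = G^[n] (h0 (scl n x)) := ih

lemma rep (n : ℕ) (x : ℂ × ℂ) (hx : ‖x‖ < 2^n*(r0/2)) :
    hG x = G^[n] (h0 (scl n x)) := by
  have h1 := consMany (NX x) n x hx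
  have h2 := consMany n (NX x) x (NX_spec x)
  rw [hG, ← h2, ← h1, Nat.add_comm]

lemma hG_small (y : ℂ × ℂ) (hy : ‖y‖ < r0/2) : hG y = h0 y := by
  have := rep 0 y (by simpa using hy)
  simpa [scl_zero] using this

lemma hG_face (x : ℂ × ℂ) : hG x = G (hG (c • x)) := by
  set n := NX x
  have hn := NX_spec x
  have hn1 : ‖x‖ < 2^(n+1)*(r0/2) := by
    refine hn.trans_le ?_
    have : (2:ℝ)^n ≤ 2^(n+1) := by
      refine pow_le_pow_right₀ (by norm_num) (by omega)
    nlinarith [r0pos]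
  have hcx : ‖c • x‖ < 2^n*(r0/2) := by
    rw [nsmul_c]
    have h2 : (0:ℝ) < 2^n := by positivity
    have h3 : (0:ℝ) < 2^n*(r0/2) := by
      have : (0:ℝ) < r0/2 := by rw [r0]; norm_num
      positivity
    linarith
  rw [rep (n+1) x hn1, rep n (c • x) hcx, Function.iterate_succ_apply' G n, ← scl_succ]

lemma hG_F (x : ℂ × ℂ) : Fm (hG x) = hG (c • x) := by
  rw [hG_face x, FG]

lemma hG_iterF (k : ℕ) (x : ℂ × ℂ) : hG (scl k x) = Fm^[k] (hG x) := by
  induction k with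
  | zero => rw [scl_zero]; rfl
  | succ k ih =>
    have e : scl (k+1) x = c • (scl k x) := by
      rw [scl, scl, pow_succ', mul_smul]
    rw [e, ← hG_F, ih, ← Function.iterate_succ_apply' Fm k]

lemma hG_diff : Differentiable ℂ hG := by
  intro x0
  obtain ⟨n, hn⟩ : ∃ n, ‖x0‖ < 2^n*(r0/2) := NNex x0
  have hopen : IsOpen {x : ℂ × ℂ | ‖x‖ < 2^n*(r0/2)} := by
    have : {x : ℂ × ℂ | ‖x‖ < 2^n*(r0/2)} = Metric.ball 0 (2^n*(r0/2)) := by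
      ext z; simp [Metric.mem_ball, dist_zero_right]
    rw [this]; exact Metric.isOpen_ball
  have hd : DifferentiableAt ℂ (fun x => G^[n] (h0 (scl n x))) x0 := by
    have hscl : Differentiable ℂ (scl n) := fun z => by
      exact (differentiableAt_id (x := z)).const_smul (c^n)
    have hin : scl n x0 ∈ Metric.ball (0:ℂ × ℂ) r0 := by
      rw [Metric.mem_ball, dist_zero_right, nscl]
      have h2 : (0:ℝ) < 2^n := by positivity
      have h2' : (1:ℝ) ≤ 2^n := one_le_pow₀ (by norm_num)
      rw [div_lt_iff₀ h2]
      calc ‖x0‖ < 2^n*(r0/2) := hn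
        _ ≤ r0*2^n := by nlinarith [r0pos]
    have hh0 : DifferentiableAt ℂ h0 (scl n x0) := (h0_hasFDeriv hin).differentiableAt
    exact ((diff_G.iterate n) _).comp x0 (hh0.comp x0 (hscl x0))
  refine hd.congr_of_eventuallyEq ?_
  filter_upwards [hopen.mem_nhds hn] with z hz
  exact rep n z hz

lemma hG_inj : Function.Injective hG := by
  intro p q h
  obtain ⟨k, hk⟩ : ∃ k, max ‖p‖ ‖q‖ < 2^k*(r0/4) := by
    obtain ⟨k, hk⟩ := pow_unbounded_of_one_lt ((max ‖p‖ ‖q‖)/(r0/4)) (by norm_num : (1:ℝ) < 2)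
    exact ⟨k, by rw [div_lt_iff₀ (by rw [r0]; norm_num : (0:ℝ) < r0/4)] at hk; linarith⟩
  have h2 : (0:ℝ) < 2^k := by positivity
  have hp : ‖scl k p‖ < r0/2 := by
    rw [nscl, div_lt_iff₀ h2]
    have := le_max_left ‖p‖ ‖q‖
    calc ‖p‖ ≤ max ‖p‖ ‖q‖ := this
      _ < 2^k*(r0/4) := hk
      _ ≤ r0/2*2^k := by nlinarith [r0pos]
  have hq : ‖scl k q‖ < r0/2 := by
    rw [nscl, div_lt_iff₀ h2]
    calc ‖q‖ ≤ max ‖p‖ ‖q‖ := le_max_right _ _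
      _ < 2^k*(r0/4) := hk
      _ ≤ r0/2*2^k := by nlinarith [r0pos]
  have e : h0 (scl k p) = h0 (scl k q) := by
    rw [← hG_small _ hp, ← hG_small _ hq, hG_iterF, hG_iterF, h]
  have hpb : scl k p ∈ Metric.ball (0:ℂ × ℂ) r0 := by
    rw [Metric.mem_ball, dist_zero_right]; linarith [r0pos]
  have hqb : scl k q ∈ Metric.ball (0:ℂ × ℂ) r0 := by
    rw [Metric.mem_ball, dist_zero_right]; linarith [r0pos]
  have := h0_inj hpb hqb e
  have hc : (c^k) ≠ 0 := pow_ne_zero _ (by rw [c]; norm_num)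
  exact smul_right_injective (ℂ × ℂ) hc this

def Qq (y : ℂ × ℂ) : ℂ := y.2 - y.1^2
def Bad (y : ℂ × ℂ) : Prop := 100 ≤ ‖Qq y‖ ∧ 1 + ‖y.1‖^2 ≤ 4*‖Qq y‖

lemma nfour : ‖(4:ℂ)‖ = 4 := by norm_num
lemma ntwo' : ‖(2:ℂ)‖ = 2 := by norm_num

lemma Q_Fm (y : ℂ × ℂ) : Qq (Fm y) = (Qq y)/2 - (y.1 - (Qq y)^2/4)^2/4 := by
  simp only [Qq, Fm]
  ring

lemma fst_Fm (y : ℂ × ℂ) : (Fm y).1 = (y.1 - (Qq y)^2/4)/2 := by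
  simp only [Qq, Fm]

lemma BadInv {y : ℂ × ℂ} (h : Bad y) : Bad (Fm y) := by
  obtain ⟨h1, h2⟩ := h
  set t := ‖Qq y‖ with ht
  set s := ‖y.1 - (Qq y)^2/4‖ with hs
  have hu : ‖y.1‖ ≤ 2*t := by nlinarith [sq_nonneg (‖y.1‖ - 1)]
  have hq4 : ‖(Qq y)^2/4‖ = t^2/4 := by
    rw [norm_div, norm_pow, nfour]
  have hs_low : t^2/4 - 2*t ≤ s := by
    have := norm_sub_norm_le ((Qq y)^2/4) (y.1)
    have e : ‖(Qq y)^2/4 - y.1‖ = s := by rw [norm_sub_rev]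
    rw [e, hq4] at this
    linarith
  have hs_up : s ≤ t^2/4 + 2*t := by
    have := norm_sub_le (y.1) ((Qq y)^2/4)
    rw [hq4] at this
    rw [hs]
    linarith
  have hQlow : s^2/4 - t/2 ≤ ‖Qq (Fm y)‖ := by
    rw [Q_Fm]
    have := norm_sub_norm_le ((y.1 - (Qq y)^2/4)^2/4) ((Qq y)/2)
    have e1 : ‖(y.1 - (Qq y)^2/4)^2/4‖ = s^2/4 := by rw [norm_div, norm_pow, nfour]
    have e2 : ‖(Qq y)/2‖ = t/2 := by rw [norm_div, ntwo']
    rw [e1, e2] at this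
    calc s^2/4 - t/2 ≤ ‖(y.1 - (Qq y)^2/4)^2/4 - (Qq y)/2‖ := this
      _ = ‖(Qq y)/2 - (y.1 - (Qq y)^2/4)^2/4‖ := by rw [norm_sub_rev]
  have hfst : ‖(Fm y).1‖ = s/2 := by
    rw [fst_Fm, norm_div, ntwo']
  have hslarge : 23*t ≤ s := by nlinarith
  constructor
  · nlinarith
  · rw [hfst]
    have : (s/2)^2 = s^2/4 := by ring
    nlinarith

lemma notBad_small {z : ℂ × ℂ} (hz : ‖z‖ ≤ 1) : ¬ Bad z := by
  rintro ⟨h1, -⟩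
  have ha : ‖z.2‖ ≤ 1 := (le_max_right _ _).trans hz
  have hb : ‖z.1‖ ≤ 1 := (le_max_left _ _).trans hz
  have : ‖Qq z‖ ≤ 2 := by
    calc ‖Qq z‖ ≤ ‖z.2‖ + ‖z.1^2‖ := norm_sub_le _ _
      _ = ‖z.2‖ + ‖z.1‖^2 := by rw [norm_pow]
      _ ≤ 2 := by nlinarith [norm_nonneg z.1]
  linarith
lemma avoid (x : ℂ × ℂ) : ¬ Bad (hG x) := by
  intro hB
  have hall : ∀ k, Bad (Fm^[k] (hG x)) := by
    intro k
    induction k with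
    | zero => simpa using hB
    | succ k ih => rw [Function.iterate_succ_apply']; exact BadInv ih
  obtain ⟨k, hk⟩ : ∃ k, ‖x‖ < 2^k*(r0/4) := by
    obtain ⟨k, hk⟩ := pow_unbounded_of_one_lt (‖x‖/(r0/4)) (by norm_num : (1:ℝ) < 2)
    exact ⟨k, by rw [div_lt_iff₀ (by rw [r0]; norm_num : (0:ℝ) < r0/4)] at hk; linarith⟩
  have h2 : (0:ℝ) < 2^k := by positivity
  have hsk : ‖scl k x‖ < r0/2 := by
    rw [nscl, div_lt_iff₀ h2]
    calc ‖x‖ < 2^k*(r0/4) := hk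
      _ ≤ r0/2*2^k := by nlinarith [(by rw [r0]; norm_num : (0:ℝ) < r0)]
  have e : Fm^[k] (hG x) = h0 (scl k x) := by
    rw [← hG_iterF, hG_small _ hsk]
  have hr0 : r0 ≤ 1 := by rw [r0]; norm_num
  have hsk' : ‖scl k x‖ ≤ r0 := by linarith [(by rw [r0]; norm_num : (0:ℝ) < r0)]
  have hcl := h0_close (scl k x) hsk'
  have hnorm : ‖h0 (scl k x)‖ ≤ 1 := by
    have htri : ‖h0 (scl k x)‖ - ‖scl k x‖ ≤ ‖h0 (scl k x) - scl k x‖ :=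
      norm_sub_norm_le _ _
    have hn0 : (0:ℝ) ≤ ‖scl k x‖ := norm_nonneg _
    have hsk'' : ‖scl k x‖ ≤ 1/2048 := by rw [r0] at hsk'; exact hsk'
    nlinarith
  exact notBad_small hnorm (e ▸ hall k)


end S7
end

open S7 Complex

/-- there is an injective holomorphic map Φ : ℂ² → ℂ² with image
contained in V = {(z,w) : |w| < 1 + |z|²}. -/
theorem stmt7 :
    ∃ Φ : ℂ × ℂ → ℂ × ℂ,
      Differentiable ℂ Φ ∧ Function.Injective Φ ∧
      ∀ x : ℂ × ℂ, ‖(Φ x).2‖ < 1 + ‖(Φ x).1‖ ^ 2 := by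

  refine ⟨fun x => ((hG x).1, ((hG x).2 - (hG x).1^2)/400), ?_, ?_, ?_⟩
  · have d1 : Differentiable ℂ (fun x => (hG x).1) := hG_diff.fst
    have d2' : Differentiable ℂ (fun x => ((hG x).2 - (hG x).1^2)) :=
      (hG_diff.snd).sub ((hG_diff.fst).pow 2)
    have d2 : Differentiable ℂ (fun x => ((hG x).2 - (hG x).1^2)/400) := by
      have : (fun x : ℂ × ℂ => ((hG x).2 - (hG x).1^2)/400)
          = fun x : ℂ × ℂ => ((400:ℂ)⁻¹) * ((hG x).2 - (hG x).1^2) := by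
        funext x; rw [div_eq_inv_mul]
      rw [this]
      exact d2'.const_mul _
    exact d1.prodMk d2
  · intro p q h
    simp only [Prod.mk.injEq] at h
    obtain ⟨h1, h2⟩ := h
    apply hG_inj
    have h3 : (hG p).2 - (hG p).1^2 = (hG q).2 - (hG q).1^2 := by
      field_simp at h2
      exact h2
    rw [h1] at h3
    have h4 : (hG p).2 = (hG q).2 := by
      have := sub_left_inj.mp h3
      exact this
    exact Prod.ext h1 h4
  · intro x
    have hnb := avoid x
    rw [Bad] at hnb
    push_neg at hnb
    simp only
    have e2 : ‖((hG x).2 - (hG x).1^2)/400‖ = ‖Qq (hG x)‖/400 := by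
      rw [norm_div, Qq]
      norm_num
    have e1 : ‖(hG x).1‖ = ‖(hG x).1‖ := rfl
    rw [e1, e2]
    have hsq : (0:ℝ) ≤ ‖(hG x).1‖^2 := sq_nonneg _
    by_cases hc : 100 ≤ ‖Qq (hG x)‖
    · have h4 := hnb hc
      linarith
    · push_neg at hc
      have hq0 : (0:ℝ) ≤ ‖Qq (hG x)‖ := norm_nonneg _
      linarith
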